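/- If the induced non-autonomous system on M(X) is weakly mixing of order m (for some m ≥ 2), then the base non-autonomous system (X, f_{1,∞}) is weakly mixing of order m. -/

import Mathlib

open Set Filter MeasureTheory TopologicalSpace

/-- `iterN f n = f_{n-1} ∘ ⋯ ∘ f_0`, the `n`-th iterate of the non-autonomous system. -/
def iterN {X : Type*} (f : ℕ → X → X) : ℕ → X → X
  | 0 => id
  | n + 1 => f n ∘ iterN f n

/-- Topological transitivity of a non-autonomous system. -/
def NATransitive {X : Type*} [TopologicalSpace X] (f : ℕ → X → X) : Prop :=
  ∀ U V : Set X, IsOpen U → IsOpen V → U.Nonempty → V.Nonempty →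
    ∃ n : ℕ, 0 < n ∧ (iterN f n '' U ∩ V).Nonempty

/-- Weak mixing (order 2). -/
def NAWeaklyMixing {X : Type*} [TopologicalSpace X] (f : ℕ → X → X) : Prop :=
  ∀ U₁ U₂ V₁ V₂ : Set X, IsOpen U₁ → IsOpen U₂ → IsOpen V₁ → IsOpen V₂ →
    U₁.Nonempty → U₂.Nonempty → V₁.Nonempty → V₂.Nonempty →
    ∃ n : ℕ, 0 < n ∧ (iterN f n '' U₁ ∩ V₁).Nonempty ∧ (iterN f n '' U₂ ∩ V₂).Nonempty

/-- Weak mixing of order `m`. -/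
def NAWeaklyMixingOrder {X : Type*} [TopologicalSpace X] (f : ℕ → X → X) (m : ℕ) : Prop :=
  ∀ U V : Fin m → Set X, (∀ i, IsOpen (U i)) → (∀ i, IsOpen (V i)) →
    (∀ i, (U i).Nonempty) → (∀ i, (V i).Nonempty) →
    ∃ n : ℕ, 0 < n ∧ ∀ i, (iterN f n '' U i ∩ V i).Nonempty

/-- Banks's condition. -/
def NABanks {X : Type*} [TopologicalSpace X] (f : ℕ → X → X) : Prop :=
  ∀ U V W : Set X, IsOpen U → IsOpen V → IsOpen W →
    U.Nonempty → V.Nonempty → W.Nonempty →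
    ∃ n : ℕ, 0 < n ∧ (iterN f n '' U ∩ V).Nonempty ∧ (iterN f n '' U ∩ W).Nonempty

/-- Topological mixing. -/
def NAMixing {X : Type*} [TopologicalSpace X] (f : ℕ → X → X) : Prop :=
  ∀ U V : Set X, IsOpen U → IsOpen V → U.Nonempty → V.Nonempty →
    ∃ N : ℕ, ∀ n ≥ N, (iterN f n '' U ∩ V).Nonempty

/-- `blockC f s k = f_{s+k-1} ∘ ⋯ ∘ f_s`. -/
def blockC {X : Type*} (f : ℕ → X → X) (s k : ℕ) : X → X :=
  iterN (fun i => f (s + i)) k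

/-- The `k`-th iterate system `f_{1,∞}^{[k]}`. -/
def kthSys {X : Type*} (f : ℕ → X → X) (k : ℕ) : ℕ → X → X :=
  fun n => blockC f (n * k) k

/-- The induced non-autonomous system on Borel probability measures (pushforwards). -/
noncomputable def inducedM {X : Type*} [MeasurableSpace X] [TopologicalSpace X]
    [BorelSpace X] (f : ℕ → X → X) (hf : ∀ n, Continuous (f n)) :
    ℕ → ProbabilityMeasure X → ProbabilityMeasure X :=
  fun n μ => μ.map ((hf n).measurable.aemeasurable)

/-- The induced non-autonomous system on the hyperspace of non-empty compact subsets. -/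
def inducedK {X : Type*} [TopologicalSpace X] (f : ℕ → X → X) (hf : ∀ n, Continuous (f n)) :
    ℕ → NonemptyCompacts X → NonemptyCompacts X :=
  fun n K => ⟨⟨f n '' (K : Set X), K.isCompact.image (hf n)⟩, K.nonempty.image _⟩

/-- The set `N(U, δ)` of sensitivity times. -/
def NSet {X : Type*} [PseudoMetricSpace X] (f : ℕ → X → X) (U : Set X) (δ : ℝ) : Set ℕ :=
  {n | 0 < n ∧ ∃ x ∈ U, ∃ y ∈ U, δ < dist (iterN f n x) (iterN f n y)}

/-- Sensitive dependence on initial conditions. -/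
def NASensitive {X : Type*} [PseudoMetricSpace X] (f : ℕ → X → X) : Prop :=
  ∃ δ : ℝ, 0 < δ ∧ ∀ x : X, ∀ U : Set X, IsOpen U → x ∈ U →
    ∃ y ∈ U, ∃ n : ℕ, 0 < n ∧ δ < dist (iterN f n x) (iterN f n y)

/-- A thick subset of ℕ. -/
def ThickSet (S : Set ℕ) : Prop := ∀ p : ℕ, ∃ n : ℕ, ∀ j ≤ p, n + j ∈ S

/-- A syndetic subset of ℕ. -/
def SyndeticSet (S : Set ℕ) : Prop := ∃ a : ℕ, ∀ i : ℕ, ∃ j, i ≤ j ∧ j ≤ i + a ∧ j ∈ S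

/-- Upper density of a subset of ℕ. -/
noncomputable def upperDens (S : Set ℕ) : ℝ :=
  Filter.limsup (fun n : ℕ => (Nat.card ↥(S ∩ Set.Iio n) : ℝ) / n) Filter.atTop

/-- Periodic point of a non-autonomous system. -/
def NAPeriodicPt {X : Type*} (f : ℕ → X → X) (x : X) : Prop :=
  ∃ n : ℕ, 0 < n ∧ ∀ k : ℕ, 0 < k → iterN f (n * k) x = x


lemma iterN_continuous' {X : Type*} [TopologicalSpace X] (f : ℕ → X → X)
    (hf : ∀ n, Continuous (f n)) (n : ℕ) : Continuous (iterN f n) := by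
  induction n with
  | zero => exact continuous_id
  | succ k ih => exact (hf k).comp ih

lemma iterN_inducedM' {X : Type*} [MetricSpace X] [MeasurableSpace X] [BorelSpace X]
    (f : ℕ → X → X) (hf : ∀ n, Continuous (f n)) (n : ℕ) (μ : ProbabilityMeasure X) :
    (iterN (inducedM f hf) n μ).toMeasure = Measure.map (iterN f n) μ.toMeasure := by
  induction n with
  | zero => simp [iterN, Measure.map_id]
  | succ k ih =>
      show ((inducedM f hf k) (iterN (inducedM f hf) k μ) : Measure X) = _
      rw [inducedM, ProbabilityMeasure.toMeasure_map, ih,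
        Measure.map_map (hf k).measurable (iterN_continuous' f hf k).measurable]
      rfl

lemma isOpen_gt_half' {X : Type*} [MetricSpace X] [MeasurableSpace X] [BorelSpace X]
    {U : Set X} (hU : IsOpen U) :
    IsOpen {μ : ProbabilityMeasure X | (1/2 : ENNReal) < μ.toMeasure U} := by
  rw [isOpen_iff_mem_nhds]
  intro μ hμ
  by_contra hmem
  have hne : (nhds μ ⊓ 𝓟 {ν : ProbabilityMeasure X | ¬ (1/2 : ENNReal) < ν.toMeasure U}).NeBot := by
    rw [inf_principal_neBot_iff]
    intro s hs
    by_contra hempty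
    apply hmem
    filter_upwards [hs] with ν hν
    by_contra hlt
    have hmem2 : ν ∈ s ∩ {ν : ProbabilityMeasure X | ¬ (1/2 : ENNReal) < ν.toMeasure U} :=
      ⟨hν, hlt⟩
    rw [Set.not_nonempty_iff_eq_empty.mp hempty] at hmem2
    exact hmem2
  set L := nhds μ ⊓ 𝓟 {ν : ProbabilityMeasure X | ¬ (1/2 : ENNReal) < ν.toMeasure U}
  have htend : Tendsto (fun ν : ProbabilityMeasure X => ν) L (nhds μ) :=
    tendsto_inf_left tendsto_id
  have h1 := MeasureTheory.ProbabilityMeasure.le_liminf_measure_open_of_tendsto htend hU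
  have h2 : L.liminf (fun ν : ProbabilityMeasure X => ν.toMeasure U) ≤ 1/2 := by
    apply liminf_le_of_frequently_le'
    apply Eventually.frequently
    filter_upwards [mem_inf_of_right (mem_principal_self _)] with ν hν
    exact le_of_not_gt hν
  exact absurd (hμ.trans_le (h1.trans h2)) (lt_irrefl _)

/-- if the induced system on probability measures is weakly mixing of
order `m` (`m ≥ 2`), then so is the base system. -/
theorem weaklyMixing_order_m_of_measures {X : Type*} [MetricSpace X] [CompactSpace X]
    [MeasurableSpace X] [BorelSpace X] (f : ℕ → X → X) (hf : ∀ n, Continuous (f n))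
    (m : ℕ) (hm : 2 ≤ m) (h : NAWeaklyMixingOrder (inducedM f hf) m) :
    NAWeaklyMixingOrder f m := by
  intro U V hUo hVo hUne hVne
  set 𝒰 : Fin m → Set (ProbabilityMeasure X) :=
    fun i => {μ | (1/2 : ENNReal) < μ.toMeasure (U i)} with h𝒰
  set 𝒱 : Fin m → Set (ProbabilityMeasure X) :=
    fun i => {μ | (1/2 : ENNReal) < μ.toMeasure (V i)} with h𝒱
  have hhalf : (1/2 : ENNReal) < 1 := by norm_num
  have hdne : ∀ (W : Fin m → Set X), (∀ i, (W i).Nonempty) →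
      ∀ i, ({μ : ProbabilityMeasure X | (1/2 : ENNReal) < μ.toMeasure (W i)}).Nonempty := by
    intro W hW i
    obtain ⟨x, hx⟩ := hW i
    refine ⟨⟨Measure.dirac x, Measure.dirac.isProbabilityMeasure⟩, ?_⟩
    show (1/2 : ENNReal) < (Measure.dirac x) (W i)
    rw [Measure.dirac_apply_of_mem hx]; exact hhalf
  obtain ⟨n, hn, hi⟩ := h 𝒰 𝒱 (fun i => isOpen_gt_half' (hUo i))
    (fun i => isOpen_gt_half' (hVo i)) (hdne U hUne) (hdne V hVne)
  refine ⟨n, hn, fun i => ?_⟩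
  obtain ⟨ν, ⟨μ, hμU, rfl⟩, hνV⟩ := hi i
  have hpre : (iterN (inducedM f hf) n μ).toMeasure (V i)
      = μ.toMeasure ((iterN f n) ⁻¹' (V i)) := by
    rw [iterN_inducedM', Measure.map_apply (iterN_continuous' f hf n).measurable
      (hVo i).measurableSet]
  have hμV : (1/2 : ENNReal) < μ.toMeasure ((iterN f n) ⁻¹' (V i)) := by
    rw [← hpre]; exact hνV
  have key : (U i ∩ (iterN f n) ⁻¹' (V i)).Nonempty := by
    by_contra he
    rw [Set.not_nonempty_iff_eq_empty] at he
    have hdisj : Disjoint (U i) ((iterN f n) ⁻¹' (V i)) :=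
      Set.disjoint_iff_inter_eq_empty.mpr he
    have hsum := measure_union (μ := μ.toMeasure) hdisj
      ((hVo i).measurableSet.preimage (iterN_continuous' f hf n).measurable)
    have hle : μ.toMeasure (U i ∪ (iterN f n) ⁻¹' (V i)) ≤ 1 := prob_le_one
    rw [hsum] at hle
    have hlt : (1 : ENNReal) < μ.toMeasure (U i) + μ.toMeasure ((iterN f n) ⁻¹' (V i)) := by
      calc (1 : ENNReal) = 1/2 + 1/2 := (ENNReal.add_halves 1).symm
        _ < _ := ENNReal.add_lt_add hμU hμV
    exact absurd (hlt.trans_le hle) (lt_irrefl _)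
  obtain ⟨x, hxU, hxV⟩ := key
  exact ⟨iterN f n x, ⟨x, hxU, rfl⟩, hxV⟩
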